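/- For |q|<1, E₈(q) = E₄(q)². -/

import Mathlib

open Complex

/-- Eisenstein series `E_k(q) = 1 - (2k/B_k) ∑_{r≥1} r^{k-1} q^r/(1-q^r)` (for even `k ≥ 4`),
with `B_k` the Bernoulli numbers defined by `t/(e^t-1) = ∑ B_n t^n/n!`. -/
noncomputable def Eis (k : ℕ) (q : ℂ) : ℂ :=
  1 - (2 * (k : ℂ) / ((bernoulli k : ℚ) : ℂ)) *
    ∑' r : ℕ, ((r : ℂ) + 1) ^ (k - 1) * q ^ (r + 1) / (1 - q ^ (r + 1))

/-- The modular discriminant `Δ(q) = q ∏_{r≥1} (1-q^r)^24`. -/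
noncomputable def Δ (q : ℂ) : ℂ := q * ∏' r : ℕ, (1 - q ^ (r + 1)) ^ 24

namespace E8aux

open Finset ArithmeticFunction
open scoped ArithmeticFunction.sigma

/-- quadruples ((a,x),(b,y)) of positive naturals with a*x + b*y = n -/
def TT (n : ℕ) : Finset ((ℕ × ℕ) × ℕ × ℕ) :=
  ((Icc 1 n ×ˢ Icc 1 n) ×ˢ Icc 1 n ×ˢ Icc 1 n).filter
    fun p => p.1.1 * p.1.2 + p.2.1 * p.2.2 = n

lemma mem_TT {n : ℕ} {p : (ℕ × ℕ) × ℕ × ℕ} :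
    p ∈ TT n ↔ 0 < p.1.1 ∧ 0 < p.1.2 ∧ 0 < p.2.1 ∧ 0 < p.2.2 ∧
      p.1.1 * p.1.2 + p.2.1 * p.2.2 = n := by
  obtain ⟨⟨a, x⟩, b, y⟩ := p
  simp only [TT, mem_filter, mem_product, mem_Icc]
  constructor
  · rintro ⟨⟨⟨⟨ha1, _⟩, hx1, _⟩, ⟨hb1, _⟩, hy1, _⟩, he⟩
    exact ⟨ha1, hx1, hb1, hy1, he⟩
  · rintro ⟨ha, hx, hb, hy, he⟩
    have hax : a * x ≤ n := le_trans (Nat.le_add_right _ _) he.le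
    have hby : b * y ≤ n := le_trans (Nat.le_add_left _ _) he.le
    have h1 : a ≤ n := le_trans (Nat.le_mul_of_pos_right a hx) hax
    have h2 : x ≤ n := le_trans (Nat.le_mul_of_pos_left x ha) hax
    have h3 : b ≤ n := le_trans (Nat.le_mul_of_pos_right b hy) hby
    have h4 : y ≤ n := le_trans (Nat.le_mul_of_pos_left y hb) hby
    exact ⟨⟨⟨⟨ha, h1⟩, hx, h2⟩, ⟨hb, h3⟩, hy, h4⟩, he⟩

/-- swap symmetry of TT -/
lemma sum_swap_TT {n : ℕ} {M : Type*} [AddCommMonoid M] (F : ℕ → ℕ → ℕ → ℕ → M)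
    (P : ℕ → ℕ → ℕ → ℕ → Prop) [∀ a x b y, Decidable (P a x b y)] :
    ∑ p ∈ (TT n).filter (fun p => P p.1.1 p.1.2 p.2.1 p.2.2), F p.1.1 p.1.2 p.2.1 p.2.2 =
    ∑ p ∈ (TT n).filter (fun p => P p.2.1 p.2.2 p.1.1 p.1.2), F p.2.1 p.2.2 p.1.1 p.1.2 := by
  apply Finset.sum_nbij' (fun p => (p.2, p.1)) (fun p => (p.2, p.1))
  · rintro ⟨⟨a, x⟩, b, y⟩ hp
    simp only [mem_filter, mem_TT] at hp ⊢
    exact ⟨⟨hp.1.2.2.1, hp.1.2.2.2.1, hp.1.1, hp.1.2.1, (add_comm _ _).trans hp.1.2.2.2.2⟩, hp.2⟩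
  · rintro ⟨⟨a, x⟩, b, y⟩ hp
    simp only [mem_filter, mem_TT] at hp ⊢
    exact ⟨⟨hp.1.2.2.1, hp.1.2.2.2.1, hp.1.1, hp.1.2.1, (add_comm _ _).trans hp.1.2.2.2.2⟩, hp.2⟩
  · rintro ⟨⟨a, x⟩, b, y⟩ _; rfl
  · rintro ⟨⟨a, x⟩, b, y⟩ _; rfl
  · rintro ⟨⟨a, x⟩, b, y⟩ _; rfl


lemma sum_tri {α M : Type*} [AddCommMonoid M] (s : Finset α) (g h : α → ℕ) (f : α → M) :
    ∑ p ∈ s, f p = (∑ p ∈ s.filter (fun p => h p < g p), f p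
      + ∑ p ∈ s.filter (fun p => g p < h p), f p) + ∑ p ∈ s.filter (fun p => g p = h p), f p := by
  classical
  rw [← Finset.sum_filter_add_sum_filter_not s (fun p => h p < g p) f, add_assoc]
  congr 1
  rw [← Finset.sum_filter_add_sum_filter_not (s.filter (fun p => ¬ h p < g p))
      (fun p => g p < h p) f, filter_filter, filter_filter]
  congr 2
  · exact filter_congr (fun p _ => by constructor <;> intro hh <;> omega)
  · exact filter_congr (fun p _ => by constructor <;> intro hh <;> omega)

lemma sum_euclid {n : ℕ} {M : Type*} [AddCommMonoid M] (F : ℕ → ℕ → ℕ → ℕ → M) :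
    ∑ p ∈ (TT n).filter (fun p => p.2.2 < p.1.2), F p.1.1 p.1.2 p.2.1 p.2.2 =
    ∑ p ∈ (TT n).filter (fun p => p.1.1 < p.2.1), F p.1.1 (p.1.2 + p.2.2) (p.2.1 - p.1.1) p.2.2 := by
  apply Finset.sum_nbij' (i := fun p => ((p.1.1, p.1.2 - p.2.2), (p.1.1 + p.2.1, p.2.2)))
      (j := fun p => ((p.1.1, p.1.2 + p.2.2), (p.2.1 - p.1.1, p.2.2)))
  · rintro ⟨⟨a, x⟩, b, y⟩ hp
    simp only [mem_filter, mem_TT] at hp ⊢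
    obtain ⟨⟨ha, hx, hb, hy, he⟩, hlt⟩ := hp
    refine ⟨⟨ha, by omega, by omega, hy, ?_⟩, by omega⟩
    have h1 : a * (x - y) + a * y = a * x := by rw [← Nat.mul_add]; congr 1; omega
    have h2 : (a + b) * y = a * y + b * y := add_mul a b y
    -- goal : a * (x - y) + (a + b) * y = n
    rw [h2, ← he, ← h1]; ring
  · rintro ⟨⟨a, x⟩, b, y⟩ hp
    simp only [mem_filter, mem_TT] at hp ⊢
    obtain ⟨⟨ha, hx, hb, hy, he⟩, hlt⟩ := hp
    refine ⟨⟨ha, by omega, by omega, hy, ?_⟩, by omega⟩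
    have h1 : (b - a) * y + a * y = b * y := by rw [← Nat.add_mul]; congr 1; omega
    have h2 : a * (x + y) = a * x + a * y := mul_add a x y
    rw [h2, ← he, ← h1]; ring
  · rintro ⟨⟨a, x⟩, b, y⟩ hp
    simp only [mem_filter, mem_TT] at hp
    have : x - y + y = x := by omega
    simp [this]
  · rintro ⟨⟨a, x⟩, b, y⟩ hp
    simp only [mem_filter, mem_TT] at hp
    have : x + y - y = x := by omega
    simp [this, Nat.add_sub_cancel_left]
    omega
  · rintro ⟨⟨a, x⟩, b, y⟩ hp
    simp only [mem_filter, mem_TT] at hp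
    have e1 : x - y + y = x := by omega
    have e2 : a + b - a = b := by omega
    rw [e1, e2]

lemma sum_diag_x {n : ℕ} {M : Type*} [AddCommMonoid M] (F : ℕ → ℕ → ℕ → ℕ → M) :
    ∑ p ∈ (TT n).filter (fun p => p.1.2 = p.2.2), F p.1.1 p.1.2 p.2.1 p.2.2 =
    ∑ de ∈ n.divisorsAntidiagonal, ∑ a ∈ Ico 1 de.1, F a de.2 (de.1 - a) de.2 := by
  rw [Finset.sum_sigma' n.divisorsAntidiagonal (fun de => Ico 1 de.1)
    (fun de a => F a de.2 (de.1 - a) de.2)]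
  apply Finset.sum_nbij' (i := fun p => (⟨(p.1.1 + p.2.1, p.1.2), p.1.1⟩ :
      Σ _ : ℕ × ℕ, ℕ)) (j := fun s => ((s.2, s.1.2), (s.1.1 - s.2, s.1.2)))
  · rintro ⟨⟨a, x⟩, b, y⟩ hp
    simp only [mem_filter, mem_TT] at hp
    obtain ⟨⟨ha, hx, hb, hy, he⟩, hxy⟩ := hp
    simp only [Finset.mem_sigma, Nat.mem_divisorsAntidiagonal, mem_Ico]
    refine ⟨⟨?_, ?_⟩, by omega, by omega⟩
    · rw [add_mul, ← he, hxy]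
    · intro h0; rw [h0] at he
      have := Nat.mul_pos ha hx; omega
  · rintro ⟨⟨d, e⟩, a⟩ hs
    simp only [Finset.mem_sigma, Nat.mem_divisorsAntidiagonal, mem_Ico] at hs
    obtain ⟨⟨hde, hn0⟩, ha1, had⟩ := hs
    simp only [mem_filter, mem_TT]
    have he1 : 0 < e := by
      rcases Nat.eq_zero_or_pos e with h | h
      · exfalso; rw [h, mul_zero] at hde; exact hn0 hde.symm
      · exact h
    refine ⟨⟨by omega, he1, by omega, he1, ?_⟩, by simp⟩
    have h1 : a * e + (d - a) * e = d * e := by rw [← Nat.add_mul]; congr 1; omega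
    rw [h1, hde]
  · rintro ⟨⟨a, x⟩, b, y⟩ hp
    simp only [mem_filter, mem_TT] at hp
    simp only [Nat.add_sub_cancel_left]
    rw [hp.2]
  · rintro ⟨⟨d, e⟩, a⟩ hs
    simp only [Finset.mem_sigma, Nat.mem_divisorsAntidiagonal, mem_Ico] at hs
    have : a + (d - a) = d := by omega
    simp [this]
  · rintro ⟨⟨a, x⟩, b, y⟩ hp
    simp only [mem_filter, mem_TT] at hp
    simp only [Nat.add_sub_cancel_left]
    rw [hp.2]

lemma sum_diag_a {n : ℕ} {M : Type*} [AddCommMonoid M] (F : ℕ → ℕ → ℕ → ℕ → M) :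
    ∑ p ∈ (TT n).filter (fun p => p.1.1 = p.2.1), F p.1.1 p.1.2 p.2.1 p.2.2 =
    ∑ de ∈ n.divisorsAntidiagonal, ∑ x ∈ Ico 1 de.2, F de.1 x de.1 (de.2 - x) := by
  rw [Finset.sum_sigma' n.divisorsAntidiagonal (fun de => Ico 1 de.2)
    (fun de x => F de.1 x de.1 (de.2 - x))]
  apply Finset.sum_nbij' (i := fun p => (⟨(p.1.1, p.1.2 + p.2.2), p.1.2⟩ :
      Σ _ : ℕ × ℕ, ℕ)) (j := fun s => ((s.1.1, s.2), (s.1.1, s.1.2 - s.2)))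
  · rintro ⟨⟨a, x⟩, b, y⟩ hp
    simp only [mem_filter, mem_TT] at hp
    obtain ⟨⟨ha, hx, hb, hy, he⟩, hab⟩ := hp
    simp only [Finset.mem_sigma, Nat.mem_divisorsAntidiagonal, mem_Ico]
    refine ⟨⟨?_, ?_⟩, by omega, by omega⟩
    · rw [mul_add, ← he, hab]
    · intro h0; rw [h0] at he
      have := Nat.mul_pos ha hx; omega
  · rintro ⟨⟨d, e⟩, x⟩ hs
    simp only [Finset.mem_sigma, Nat.mem_divisorsAntidiagonal, mem_Ico] at hs
    obtain ⟨⟨hde, hn0⟩, hx1, hxe⟩ := hs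
    simp only [mem_filter, mem_TT]
    have hd1 : 0 < d := by
      rcases Nat.eq_zero_or_pos d with h | h
      · exfalso; rw [h, zero_mul] at hde; exact hn0 hde.symm
      · exact h
    refine ⟨⟨hd1, by omega, hd1, by omega, ?_⟩, by simp⟩
    have h1 : d * x + d * (e - x) = d * e := by rw [← Nat.mul_add]; congr 1; omega
    rw [h1, hde]
  · rintro ⟨⟨a, x⟩, b, y⟩ hp
    simp only [mem_filter, mem_TT] at hp
    simp only [Nat.add_sub_cancel_left]
    rw [hp.2]
  · rintro ⟨⟨d, e⟩, x⟩ hs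
    simp only [Finset.mem_sigma, Nat.mem_divisorsAntidiagonal, mem_Ico] at hs
    have : x + (e - x) = e := by omega
    simp [this]
  · rintro ⟨⟨a, x⟩, b, y⟩ hp
    simp only [mem_filter, mem_TT] at hp
    simp only [Nat.add_sub_cancel_left]
    rw [hp.2]

lemma psum2 (d : ℕ) : 6 * ∑ a ∈ range d, (a : ℤ) ^ 2 = d * (d - 1) * (2 * d - 1) := by
  induction d with
  | zero => simp
  | succ k ih => rw [Finset.sum_range_succ]; push_cast at ih ⊢; ring_nf; ring_nf at ih; linarith

lemma psum3 (d : ℕ) : 4 * ∑ a ∈ range d, (a : ℤ) ^ 3 = d ^ 2 * (d - 1) ^ 2 := by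
  induction d with
  | zero => simp
  | succ k ih => rw [Finset.sum_range_succ]; push_cast at ih ⊢; ring_nf; ring_nf at ih; linarith

lemma psum4 (d : ℕ) : 30 * ∑ a ∈ range d, (a : ℤ) ^ 4
    = d * (d - 1) * (2 * d - 1) * (3 * d ^ 2 - 3 * d - 1) := by
  induction d with
  | zero => simp
  | succ k ih => rw [Finset.sum_range_succ]; push_cast at ih ⊢; ring_nf; ring_nf at ih; linarith

lemma psum5 (d : ℕ) : 12 * ∑ a ∈ range d, (a : ℤ) ^ 5
    = d ^ 2 * (d - 1) ^ 2 * (2 * d ^ 2 - 2 * d - 1) := by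
  induction d with
  | zero => simp
  | succ k ih => rw [Finset.sum_range_succ]; push_cast at ih ⊢; ring_nf; ring_nf at ih; linarith

lemma key_int (d : ℕ) : 60 * ∑ a ∈ range d,
    ((a : ℤ) ^ 2 * ((d : ℤ) - a) ^ 4 + (a : ℤ) ^ 3 * ((d : ℤ) - a) ^ 3)
    = (d : ℤ) ^ 7 - (d : ℤ) ^ 3 := by
  have hsplit : ∑ a ∈ range d, ((a : ℤ) ^ 2 * ((d : ℤ) - a) ^ 4 + (a : ℤ) ^ 3 * ((d : ℤ) - a) ^ 3)
      = (d : ℤ) ^ 4 * (∑ a ∈ range d, (a : ℤ) ^ 2) - 3 * (d : ℤ) ^ 3 * (∑ a ∈ range d, (a : ℤ) ^ 3)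
        + 3 * (d : ℤ) ^ 2 * (∑ a ∈ range d, (a : ℤ) ^ 4)
        - (d : ℤ) * (∑ a ∈ range d, (a : ℤ) ^ 5) := by
    rw [Finset.mul_sum, Finset.mul_sum, Finset.mul_sum, Finset.mul_sum, ← Finset.sum_sub_distrib,
      ← Finset.sum_add_distrib, ← Finset.sum_sub_distrib]
    exact Finset.sum_congr rfl fun a _ => by ring
  rw [hsplit]
  have h2 := psum2 d; have h3 := psum3 d; have h4 := psum4 d; have h5 := psum5 d
  linear_combination 10 * (d : ℤ) ^ 4 * h2 - 45 * (d : ℤ) ^ 3 * h3 + 6 * (d : ℤ) ^ 2 * h4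
    - 5 * (d : ℤ) * h5

/-- key evaluation in ℕ over `Ico 1 d` -/
lemma key_nat {d : ℕ} (hd : 0 < d) :
    60 * ∑ a ∈ Ico 1 d, (a ^ 2 * (d - a) ^ 4 + a ^ 3 * (d - a) ^ 3) + d ^ 3 = d ^ 7 := by
  have hIco : ∑ a ∈ Ico 1 d, ((a : ℤ) ^ 2 * ((d : ℤ) - a) ^ 4 + (a : ℤ) ^ 3 * ((d : ℤ) - a) ^ 3)
      = ∑ a ∈ range d, ((a : ℤ) ^ 2 * ((d : ℤ) - a) ^ 4 + (a : ℤ) ^ 3 * ((d : ℤ) - a) ^ 3) := by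
    rw [Finset.range_eq_Ico, Finset.sum_eq_sum_Ico_succ_bot hd]
    simp
  have hcast : (↑(∑ a ∈ Ico 1 d, (a ^ 2 * (d - a) ^ 4 + a ^ 3 * (d - a) ^ 3)) : ℤ)
      = ∑ a ∈ Ico 1 d, ((a : ℤ) ^ 2 * ((d : ℤ) - a) ^ 4 + (a : ℤ) ^ 3 * ((d : ℤ) - a) ^ 3) := by
    push_cast
    refine Finset.sum_congr rfl fun a ha => ?_
    rw [mem_Ico] at ha
    have : ((d - a : ℕ) : ℤ) = (d : ℤ) - a := by omega
    rw [this]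
  have := key_int d
  have hgoal : (60 : ℤ) * (∑ a ∈ Ico 1 d, (a ^ 2 * (d - a) ^ 4 + a ^ 3 * (d - a) ^ 3) : ℕ)
      + (d : ℤ) ^ 3 = (d : ℤ) ^ 7 := by
    rw [hcast, hIco]; linarith
  have := hgoal
  exact_mod_cast this

lemma pos_l {a x : ℕ} (h : 0 < a * x) : 0 < a := by
  rcases Nat.eq_zero_or_pos a with rfl | h'
  · simp at h
  · exact h'

lemma pos_r {a x : ℕ} (h : 0 < a * x) : 0 < x := by
  rcases Nat.eq_zero_or_pos x with rfl | h'
  · simp at h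
  · exact h'

lemma conv_eq (n : ℕ) :
    ∑ ij ∈ antidiagonal n, (σ 3) ij.1 * (σ 3) ij.2
      = ∑ p ∈ TT n, p.1.1 ^ 3 * p.2.1 ^ 3 := by
  have hσ : ∀ i : ℕ, (σ 3) i = ∑ de ∈ i.divisorsAntidiagonal, de.1 ^ 3 := fun i => by
    rw [sigma_apply]; exact (Nat.sum_divisorsAntidiagonal (fun d e => d ^ 3)).symm
  have step1 : ∑ ij ∈ antidiagonal n, (σ 3) ij.1 * (σ 3) ij.2
      = ∑ ij ∈ antidiagonal n, ∑ p ∈ ij.1.divisorsAntidiagonal ×ˢ ij.2.divisorsAntidiagonal,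
          p.1.1 ^ 3 * p.2.1 ^ 3 := by
    refine Finset.sum_congr rfl fun ij _ => ?_
    rw [hσ, hσ, Finset.sum_mul_sum, ← Finset.sum_product']
  rw [step1, Finset.sum_sigma' (antidiagonal n)
    (fun ij => ij.1.divisorsAntidiagonal ×ˢ ij.2.divisorsAntidiagonal)
    (fun _ p => p.1.1 ^ 3 * p.2.1 ^ 3)]
  apply Finset.sum_nbij' (i := fun s => s.2)
      (j := fun p => ⟨(p.1.1 * p.1.2, p.2.1 * p.2.2), p⟩)
  · rintro ⟨⟨u, v⟩, ⟨a, x⟩, b, y⟩ hs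
    simp only [Finset.mem_sigma, Finset.HasAntidiagonal.mem_antidiagonal, Finset.mem_product,
      Nat.mem_divisorsAntidiagonal] at hs
    obtain ⟨huv, ⟨hax, hu⟩, hby, hv⟩ := hs
    rw [mem_TT]
    have ha : 0 < a * x := by rw [hax]; exact Nat.pos_of_ne_zero hu
    have hb : 0 < b * y := by rw [hby]; exact Nat.pos_of_ne_zero hv
    exact ⟨pos_l ha, pos_r ha, pos_l hb, pos_r hb, by rw [hax, hby, huv]⟩
  · rintro ⟨⟨a, x⟩, b, y⟩ hp
    rw [mem_TT] at hp
    obtain ⟨ha, hx, hb, hy, he⟩ := hp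
    simp only [Finset.mem_sigma, Finset.HasAntidiagonal.mem_antidiagonal, Finset.mem_product,
      Nat.mem_divisorsAntidiagonal]
    refine ⟨he, ⟨by trivial, by positivity⟩, by trivial, by positivity⟩
  · rintro ⟨⟨u, v⟩, ⟨a, x⟩, b, y⟩ hs
    simp only [Finset.mem_sigma, Finset.HasAntidiagonal.mem_antidiagonal, Finset.mem_product,
      Nat.mem_divisorsAntidiagonal] at hs
    obtain ⟨huv, ⟨hax, hu⟩, hby, hv⟩ := hs
    subst hax; subst hby; rfl
  · rintro ⟨⟨a, x⟩, b, y⟩ _; rfl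
  · rintro ⟨⟨u, v⟩, ⟨a, x⟩, b, y⟩ _; rfl

theorem sigma_conv (n : ℕ) :
    (σ 3) n + 120 * ∑ ij ∈ antidiagonal n, (σ 3) ij.1 * (σ 3) ij.2 = (σ 7) n := by
  rw [conv_eq]
  -- (I) split by comparing x and y
  have hI := sum_tri (TT n) (fun p => p.1.2) (fun p => p.2.2)
    (fun p => p.1.1 ^ 2 * p.2.1 ^ 4 + p.1.1 ^ 3 * p.2.1 ^ 3)
  have hswap1 : ∑ p ∈ (TT n).filter (fun p => p.1.2 < p.2.2),
        (p.1.1 ^ 2 * p.2.1 ^ 4 + p.1.1 ^ 3 * p.2.1 ^ 3)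
      = ∑ p ∈ (TT n).filter (fun p => p.2.2 < p.1.2),
        (p.2.1 ^ 2 * p.1.1 ^ 4 + p.2.1 ^ 3 * p.1.1 ^ 3) :=
    sum_swap_TT (fun a _ b _ => a ^ 2 * b ^ 4 + a ^ 3 * b ^ 3) (fun _ x _ y => x < y)
  rw [hswap1, ← Finset.sum_add_distrib] at hI
  have hmerge1 : ∑ p ∈ (TT n).filter (fun p => p.2.2 < p.1.2),
        ((p.1.1 ^ 2 * p.2.1 ^ 4 + p.1.1 ^ 3 * p.2.1 ^ 3)
          + (p.2.1 ^ 2 * p.1.1 ^ 4 + p.2.1 ^ 3 * p.1.1 ^ 3))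
      = ∑ p ∈ (TT n).filter (fun p => p.2.2 < p.1.2),
        p.1.1 ^ 2 * p.2.1 ^ 2 * (p.1.1 + p.2.1) ^ 2 :=
    Finset.sum_congr rfl fun p _ => by ring
  rw [hmerge1, sum_euclid (fun a _ b _ => a ^ 2 * b ^ 2 * (a + b) ^ 2)] at hI
  have heuc2 : ∑ p ∈ (TT n).filter (fun p => p.1.1 < p.2.1),
        p.1.1 ^ 2 * (p.2.1 - p.1.1) ^ 2 * (p.1.1 + (p.2.1 - p.1.1)) ^ 2
      = ∑ p ∈ (TT n).filter (fun p => p.1.1 < p.2.1),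
        p.1.1 ^ 2 * p.2.1 ^ 2 * (p.2.1 - p.1.1) ^ 2 := by
    refine Finset.sum_congr rfl fun p hp => ?_
    rw [mem_filter] at hp
    have h1 : p.1.1 + (p.2.1 - p.1.1) = p.2.1 := by omega
    rw [h1]; ring
  rw [heuc2] at hI
  -- (II) split by comparing a and b
  have hII := sum_tri (TT n) (fun p => p.2.1) (fun p => p.1.1)
    (fun p => p.1.1 ^ 2 * p.2.1 ^ 4 + p.1.1 ^ 3 * p.2.1 ^ 3)
  have hswap2 : ∑ p ∈ (TT n).filter (fun p => p.2.1 < p.1.1),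
        (p.1.1 ^ 2 * p.2.1 ^ 4 + p.1.1 ^ 3 * p.2.1 ^ 3)
      = ∑ p ∈ (TT n).filter (fun p => p.1.1 < p.2.1),
        (p.2.1 ^ 2 * p.1.1 ^ 4 + p.2.1 ^ 3 * p.1.1 ^ 3) :=
    sum_swap_TT (fun a _ b _ => a ^ 2 * b ^ 4 + a ^ 3 * b ^ 3) (fun a _ b _ => b < a)
  rw [hswap2, ← Finset.sum_add_distrib] at hII
  have hmerge2 : ∑ p ∈ (TT n).filter (fun p => p.1.1 < p.2.1),
        ((p.1.1 ^ 2 * p.2.1 ^ 4 + p.1.1 ^ 3 * p.2.1 ^ 3)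
          + (p.2.1 ^ 2 * p.1.1 ^ 4 + p.2.1 ^ 3 * p.1.1 ^ 3))
      = ∑ p ∈ (TT n).filter (fun p => p.1.1 < p.2.1),
        (p.1.1 ^ 2 * p.2.1 ^ 2 * (p.2.1 - p.1.1) ^ 2 + 4 * (p.1.1 ^ 3 * p.2.1 ^ 3)) := by
    refine Finset.sum_congr rfl fun p hp => ?_
    rw [mem_filter] at hp
    have hab : p.1.1 < p.2.1 := hp.2
    have hb : p.2.1 = p.1.1 + (p.2.1 - p.1.1) := by omega
    rw [hb]
    have h0 : p.1.1 + (p.2.1 - p.1.1) - p.1.1 = p.2.1 - p.1.1 := by omega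
    rw [h0]
    ring
  have hm2 := hmerge2.trans (by rw [Finset.sum_add_distrib, ← Finset.mul_sum])
  rw [hm2] at hII
  have hZ : ∑ p ∈ (TT n).filter (fun p => p.2.1 = p.1.1),
        (p.1.1 ^ 2 * p.2.1 ^ 4 + p.1.1 ^ 3 * p.2.1 ^ 3)
      = 2 * ∑ p ∈ (TT n).filter (fun p => p.2.1 = p.1.1), p.1.1 ^ 3 * p.2.1 ^ 3 := by
    rw [Finset.mul_sum]
    refine Finset.sum_congr rfl fun p hp => ?_
    rw [mem_filter] at hp
    rw [hp.2]; ring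
  rw [hZ] at hII
  -- A33 split by comparing a and b
  have hA := sum_tri (TT n) (fun p => p.2.1) (fun p => p.1.1)
    (fun p => p.1.1 ^ 3 * p.2.1 ^ 3)
  have hswap3 : ∑ p ∈ (TT n).filter (fun p => p.2.1 < p.1.1), p.1.1 ^ 3 * p.2.1 ^ 3
      = ∑ p ∈ (TT n).filter (fun p => p.1.1 < p.2.1), p.2.1 ^ 3 * p.1.1 ^ 3 :=
    sum_swap_TT (fun a _ b _ => a ^ 3 * b ^ 3) (fun a _ b _ => b < a)
  have hswap3' : ∑ p ∈ (TT n).filter (fun p => p.1.1 < p.2.1), p.2.1 ^ 3 * p.1.1 ^ 3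
      = ∑ p ∈ (TT n).filter (fun p => p.1.1 < p.2.1), p.1.1 ^ 3 * p.2.1 ^ 3 :=
    Finset.sum_congr rfl fun p _ => by ring
  rw [hswap3, hswap3'] at hA
  -- evaluate the x = y diagonal
  have hW : ∑ p ∈ (TT n).filter (fun p => p.1.2 = p.2.2),
        (p.1.1 ^ 2 * p.2.1 ^ 4 + p.1.1 ^ 3 * p.2.1 ^ 3)
      = ∑ de ∈ n.divisorsAntidiagonal, ∑ a ∈ Ico 1 de.1,
          (a ^ 2 * (de.1 - a) ^ 4 + a ^ 3 * (de.1 - a) ^ 3) :=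
    sum_diag_x (fun a _ b _ => a ^ 2 * b ^ 4 + a ^ 3 * b ^ 3)
  rw [hW] at hI
  -- assemble
  have hkey : (σ 3) n + 60 * ∑ de ∈ n.divisorsAntidiagonal, ∑ a ∈ Ico 1 de.1,
      (a ^ 2 * (de.1 - a) ^ 4 + a ^ 3 * (de.1 - a) ^ 3) = (σ 7) n := by
    have hσ3 : (σ 3) n = ∑ de ∈ n.divisorsAntidiagonal, de.1 ^ 3 := by
      rw [sigma_apply]; exact (Nat.sum_divisorsAntidiagonal (fun d e => d ^ 3)).symm
    have hσ7 : (σ 7) n = ∑ de ∈ n.divisorsAntidiagonal, de.1 ^ 7 := by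
      rw [sigma_apply]; exact (Nat.sum_divisorsAntidiagonal (fun d e => d ^ 7)).symm
    rw [hσ3, hσ7, Finset.mul_sum, ← Finset.sum_add_distrib]
    refine Finset.sum_congr rfl fun de hde => ?_
    rw [Nat.mem_divisorsAntidiagonal] at hde
    have hd : 0 < de.1 := pos_l (hde.1 ▸ Nat.pos_of_ne_zero hde.2)
    have := key_nat (d := de.1) hd
    omega
  omega



/-- The regrouping equivalence for Lambert series. -/
def sigmaEquiv : (Σ _n : ℕ, {de : ℕ × ℕ // de ∈ Nat.divisorsAntidiagonal (_n + 1)}) ≃ ℕ × ℕ where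
  toFun s := (s.2.1.1 - 1, s.2.1.2 - 1)
  invFun p := ⟨(p.1 + 1) * (p.2 + 1) - 1, ⟨(p.1 + 1, p.2 + 1), by
    have h0 : 0 < (p.1 + 1) * (p.2 + 1) := by positivity
    simp only [Nat.mem_divisorsAntidiagonal]
    omega⟩⟩
  left_inv := by
    rintro ⟨n, ⟨⟨d, e⟩, h⟩⟩
    simp only [Nat.mem_divisorsAntidiagonal] at h
    have hde : 0 < d * e := by rw [h.1]; exact Nat.succ_pos n
    have hd : 0 < d := pos_l hde
    have he : 0 < e := pos_r hde
    have h1 : d - 1 + 1 = d := by omega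
    have h2 : e - 1 + 1 = e := by omega
    have hfst : (d - 1 + 1) * (e - 1 + 1) - 1 = n := by rw [h1, h2, h.1]; omega
    refine Sigma.ext (by dsimp only; exact hfst) ?_
    rw [Subtype.heq_iff_coe_eq (fun x => by dsimp only; rw [hfst])]
    dsimp only
    simp [h1, h2]
  right_inv := by
    rintro ⟨r, j⟩
    simp

lemma norm_q_pow_lt {q : ℂ} (hq : ‖q‖ < 1) (r : ℕ) : ‖q ^ (r + 1)‖ < 1 := by
  rw [norm_pow]
  exact pow_lt_one₀ (norm_nonneg q) hq (Nat.succ_ne_zero r)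

set_option maxHeartbeats 1000000 in
lemma summable_pairs {q : ℂ} (hq : ‖q‖ < 1) (m : ℕ) :
    Summable (fun p : ℕ × ℕ => ((p.1 : ℂ) + 1) ^ m * q ^ ((p.1 + 1) * (p.2 + 1))) := by
  have hb : Summable (fun p : ℕ × ℕ =>
      (((p.1 : ℝ) + 1) ^ m * ‖q‖ ^ (p.1 + 1)) * ‖q‖ ^ p.2) := by
    refine Summable.mul_of_nonneg (f := fun n : ℕ => ((n : ℝ) + 1) ^ m * ‖q‖ ^ (n + 1))
      (g := fun j : ℕ => ‖q‖ ^ j) ?_ ?_ (fun n => by positivity) (fun j => by positivity)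
    · have h0 : Summable (fun n : ℕ => (n : ℝ) ^ m * ‖q‖ ^ n) := by
        have := summable_norm_pow_mul_geometric_of_norm_lt_one (R := ℝ) m
          (r := ‖q‖) (by rwa [Real.norm_eq_abs, _root_.abs_of_nonneg (norm_nonneg q)])
        exact this.of_norm
      have h1 : Summable (fun n : ℕ => ((n + 1 : ℕ) : ℝ) ^ m * ‖q‖ ^ (n + 1)) :=
        (summable_nat_add_iff 1).mpr h0
      exact h1.congr fun n => by push_cast; ring
    · exact summable_geometric_of_lt_one (norm_nonneg q) hq
  apply Summable.of_norm_bounded hb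
  rintro ⟨r, j⟩
  have h1 : ‖((r : ℂ) + 1) ^ m * q ^ ((r + 1) * (j + 1))‖
      = ((r : ℝ) + 1) ^ m * ‖q‖ ^ ((r + 1) * (j + 1)) := by
    rw [norm_mul, norm_pow, norm_pow]
    congr 2
    have : ((r : ℂ) + 1) = ((r + 1 : ℕ) : ℂ) := by push_cast; ring
    rw [this, Complex.norm_natCast]
    push_cast; ring
  rw [h1]
  have h2 : ‖q‖ ^ ((r + 1) * (j + 1)) ≤ ‖q‖ ^ (r + 1 + j) := by
    apply pow_le_pow_of_le_one (norm_nonneg q) hq.le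
    nlinarith
  calc ((r : ℝ) + 1) ^ m * ‖q‖ ^ ((r + 1) * (j + 1))
      ≤ ((r : ℝ) + 1) ^ m * ‖q‖ ^ (r + 1 + j) := by
        apply mul_le_mul_of_nonneg_left h2 (by positivity)
    _ = ((r : ℝ) + 1) ^ m * ‖q‖ ^ (r + 1) * ‖q‖ ^ j := by rw [pow_add]; ring

lemma lambert_eq {q : ℂ} (hq : ‖q‖ < 1) (m : ℕ) :
    ∑' r : ℕ, ((r : ℂ) + 1) ^ m * q ^ (r + 1) / (1 - q ^ (r + 1))
      = ∑' n : ℕ, ((σ m) (n + 1) : ℂ) * q ^ (n + 1) := by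
  have hg := summable_pairs hq m
  -- step 1: each Lambert term is a geometric sum
  have hterm : ∀ r : ℕ, ((r : ℂ) + 1) ^ m * q ^ (r + 1) / (1 - q ^ (r + 1))
      = ∑' j : ℕ, ((r : ℂ) + 1) ^ m * q ^ ((r + 1) * (j + 1)) := by
    intro r
    have hz : ‖q ^ (r + 1)‖ < 1 := norm_q_pow_lt hq r
    have hgeo : ∑' j : ℕ, (q ^ (r + 1)) ^ j = (1 - q ^ (r + 1))⁻¹ :=
      tsum_geometric_of_norm_lt_one hz
    calc ((r : ℂ) + 1) ^ m * q ^ (r + 1) / (1 - q ^ (r + 1))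
        = (((r : ℂ) + 1) ^ m * q ^ (r + 1)) * ∑' j : ℕ, (q ^ (r + 1)) ^ j := by
          rw [hgeo, div_eq_mul_inv]
      _ = ∑' j : ℕ, (((r : ℂ) + 1) ^ m * q ^ (r + 1)) * (q ^ (r + 1)) ^ j :=
          (tsum_mul_left).symm
      _ = ∑' j : ℕ, ((r : ℂ) + 1) ^ m * q ^ ((r + 1) * (j + 1)) := by
          refine tsum_congr fun j => ?_
          have hexp : (r + 1) * (j + 1) = (r + 1) + (r + 1) * j := by ring
          rw [hexp, pow_add]
          ring
  rw [tsum_congr hterm, ← hg.tsum_prod]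
  -- step 2: regroup along sigmaEquiv
  have hE := (Equiv.tsum_eq sigmaEquiv
    (fun p : ℕ × ℕ => ((p.1 : ℂ) + 1) ^ m * q ^ ((p.1 + 1) * (p.2 + 1)))).symm
  rw [hE]
  have hH : ∀ s : (Σ _n : ℕ, {de : ℕ × ℕ // de ∈ Nat.divisorsAntidiagonal (_n + 1)}),
      (((sigmaEquiv s).1 : ℂ) + 1) ^ m * q ^ (((sigmaEquiv s).1 + 1) * ((sigmaEquiv s).2 + 1))
        = ((s.2.1.1 : ℂ)) ^ m * q ^ (s.1 + 1) := by
    rintro ⟨n, ⟨⟨d, e⟩, h⟩⟩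
    simp only [Nat.mem_divisorsAntidiagonal] at h
    have hde : 0 < d * e := by rw [h.1]; exact Nat.succ_pos n
    have hd : 0 < d := pos_l hde
    have he : 0 < e := pos_r hde
    simp only [sigmaEquiv, Equiv.coe_fn_mk]
    have h1 : d - 1 + 1 = d := by omega
    have h2 : e - 1 + 1 = e := by omega
    rw [h1, h2, h.1]
    congr 2
    have : ((d - 1 : ℕ) : ℂ) + 1 = ((d - 1 + 1 : ℕ) : ℂ) := by push_cast; ring
    rw [this, h1]
  rw [tsum_congr hH]
  -- step 3: tsum over sigma = iterated
  have hHsum : Summable (fun s : (Σ _n : ℕ, {de : ℕ × ℕ // de ∈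
      Nat.divisorsAntidiagonal (_n + 1)}) => ((s.2.1.1 : ℂ)) ^ m * q ^ (s.1 + 1)) := by
    have := ((sigmaEquiv.summable_iff (f := fun p : ℕ × ℕ =>
      ((p.1 : ℂ) + 1) ^ m * q ^ ((p.1 + 1) * (p.2 + 1)))).mpr hg)
    exact this.congr hH
  rw [hHsum.tsum_sigma]
  refine tsum_congr fun n => ?_
  rw [Finset.tsum_subtype (Nat.divisorsAntidiagonal (n + 1))
    (fun de => ((de.1 : ℂ)) ^ m * q ^ (n + 1)), ← Finset.sum_mul]
  congr 1
  rw [sigma_apply]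
  push_cast
  exact Nat.sum_divisorsAntidiagonal (f := fun d _e => (d : ℂ) ^ m) (n := n + 1)

lemma sigma_le (m n : ℕ) : (σ m) n ≤ n ^ (m + 1) := by
  rcases Nat.eq_zero_or_pos n with rfl | hn
  · simp
  rw [sigma_apply]
  calc ∑ d ∈ n.divisors, d ^ m ≤ ∑ _d ∈ n.divisors, n ^ m :=
        Finset.sum_le_sum fun d hd => Nat.pow_le_pow_left (Nat.divisor_le hd) m
    _ = n.divisors.card * n ^ m := by rw [Finset.sum_const, smul_eq_mul]
    _ ≤ n * n ^ m := by
        apply Nat.mul_le_mul_right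
        calc n.divisors.card ≤ (Finset.Icc 1 n).card := by
              apply Finset.card_le_card
              intro d hd
              rw [Finset.mem_Icc]
              exact ⟨Nat.pos_of_mem_divisors hd, Nat.divisor_le hd⟩
          _ = n := by rw [Nat.card_Icc]; omega
    _ = n ^ (m + 1) := by rw [pow_succ]; ring

lemma summable_sigma_norm {q : ℂ} (hq : ‖q‖ < 1) (m : ℕ) :
    Summable (fun n : ℕ => ‖((σ m) n : ℂ) * q ^ n‖) := by
  refine Summable.of_nonneg_of_le (fun n => norm_nonneg _) (fun n => ?_)
    (summable_norm_pow_mul_geometric_of_norm_lt_one (R := ℂ) (m + 1) hq)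
  · rw [norm_mul, norm_mul, norm_pow, norm_pow, Complex.norm_natCast, Complex.norm_natCast]
    apply mul_le_mul_of_nonneg_right _ (by positivity)
    calc ((σ m) n : ℝ) ≤ ((n ^ (m + 1) : ℕ) : ℝ) := Nat.cast_le.mpr (sigma_le m n)
      _ = (n : ℝ) ^ (m + 1) := by push_cast; ring

lemma cauchy_P {q : ℂ} (hq : ‖q‖ < 1) :
    (∑' n : ℕ, ((σ 3) n : ℂ) * q ^ n) * (∑' n : ℕ, ((σ 3) n : ℂ) * q ^ n)
      = ∑' n : ℕ, ((∑ ij ∈ antidiagonal n, (σ 3) ij.1 * (σ 3) ij.2 : ℕ) : ℂ) * q ^ n := by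
  rw [tsum_mul_tsum_eq_tsum_sum_antidiagonal_of_summable_norm
    (summable_sigma_norm hq 3) (summable_sigma_norm hq 3)]
  refine tsum_congr fun n => ?_
  push_cast
  rw [Finset.sum_mul]
  refine Finset.sum_congr rfl fun kl hkl => ?_
  rw [Finset.HasAntidiagonal.mem_antidiagonal] at hkl
  rw [← hkl, pow_add]
  ring

lemma summable_conv {q : ℂ} (hq : ‖q‖ < 1) :
    Summable (fun n : ℕ =>
      ((∑ ij ∈ antidiagonal n, (σ 3) ij.1 * (σ 3) ij.2 : ℕ) : ℂ) * q ^ n) := by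
  have h := summable_norm_sum_mul_antidiagonal_of_summable_norm
    (summable_sigma_norm hq 3) (summable_sigma_norm hq 3)
  apply (h.of_norm).congr
  intro n
  push_cast
  rw [Finset.sum_mul]
  refine Finset.sum_congr rfl fun kl hkl => ?_
  rw [Finset.HasAntidiagonal.mem_antidiagonal] at hkl
  rw [← hkl, pow_add]
  ring

lemma Q_eq {q : ℂ} (hq : ‖q‖ < 1) :
    (∑' n : ℕ, ((σ 7) n : ℂ) * q ^ n)
      = (∑' n : ℕ, ((σ 3) n : ℂ) * q ^ n)
        + 120 * ((∑' n : ℕ, ((σ 3) n : ℂ) * q ^ n) * (∑' n : ℕ, ((σ 3) n : ℂ) * q ^ n)) := by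
  rw [cauchy_P hq]
  have hstep : ∀ n : ℕ, ((σ 7) n : ℂ) * q ^ n
      = ((σ 3) n : ℂ) * q ^ n
        + 120 * (((∑ ij ∈ antidiagonal n, (σ 3) ij.1 * (σ 3) ij.2 : ℕ) : ℂ) * q ^ n) := by
    intro n
    have h := sigma_conv n
    have hc : ((σ 7) n : ℂ) = ((σ 3) n : ℂ)
        + 120 * ((∑ ij ∈ antidiagonal n, (σ 3) ij.1 * (σ 3) ij.2 : ℕ) : ℂ) := by
      rw [← h]; push_cast; ring
    rw [hc]; ring
  rw [tsum_congr hstep, Summable.tsum_add ((summable_sigma_norm hq 3).of_norm)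
    (((summable_conv hq)).mul_left 120), tsum_mul_left]

lemma bern5 : bernoulli' 5 = 0 := by
  rw [bernoulli'_def]; norm_num [sum_range_succ, Nat.choose]
lemma bern6 : bernoulli' 6 = 1/42 := by
  rw [bernoulli'_def]; norm_num [sum_range_succ, Nat.choose, bern5]
lemma bern7 : bernoulli' 7 = 0 := by
  rw [bernoulli'_def]; norm_num [sum_range_succ, Nat.choose, bern5, bern6]
lemma bern8 : bernoulli 8 = -1/30 := by
  rw [bernoulli_eq_bernoulli'_of_ne_one (by norm_num), bernoulli'_def]
  norm_num [sum_range_succ, Nat.choose, bern5, bern6, bern7]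
lemma bern4 : bernoulli 4 = -1/30 := by
  rw [bernoulli_eq_bernoulli'_of_ne_one (by norm_num), bernoulli'_four]

lemma summable_sigma {q : ℂ} (hq : ‖q‖ < 1) (m : ℕ) :
    Summable (fun n : ℕ => ((σ m) n : ℂ) * q ^ n) :=
  (summable_sigma_norm hq m).of_norm

lemma tail_eq {q : ℂ} (hq : ‖q‖ < 1) (m : ℕ) :
    ∑' n : ℕ, ((σ m) (n + 1) : ℂ) * q ^ (n + 1) = ∑' n : ℕ, ((σ m) n : ℂ) * q ^ n := by
  rw [Summable.tsum_eq_zero_add (summable_sigma hq m)]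
  simp

lemma Eis4_eq {q : ℂ} (hq : ‖q‖ < 1) :
    Eis 4 q = 1 + 240 * ∑' n : ℕ, ((σ 3) n : ℂ) * q ^ n := by
  unfold Eis
  have hB : ((bernoulli 4 : ℚ) : ℂ) = -1/30 := by rw [bern4]; norm_num
  rw [hB]
  simp only [show (4 : ℕ) - 1 = 3 from rfl]
  rw [lambert_eq hq 3, tail_eq hq 3]
  norm_num

lemma Eis8_eq {q : ℂ} (hq : ‖q‖ < 1) :
    Eis 8 q = 1 + 480 * ∑' n : ℕ, ((σ 7) n : ℂ) * q ^ n := by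
  unfold Eis
  have hB : ((bernoulli 8 : ℚ) : ℂ) = -1/30 := by rw [bern8]; norm_num
  rw [hB]
  simp only [show (8 : ℕ) - 1 = 7 from rfl]
  rw [lambert_eq hq 7, tail_eq hq 7]
  norm_num
end E8aux

theorem E8_eq (q : ℂ) (hq : ‖q‖ < 1) :
    Eis 8 q = (Eis 4 q) ^ 2 := by
  rw [E8aux.Eis8_eq hq, E8aux.Eis4_eq hq, E8aux.Q_eq hq]
  ring
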